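/- arXiv:0801.1195 — 2 statements merged into one kernel-verified Lean document; each statement's English description precedes it below -/
import Mathlib

section
/- Let a, b ≥ 1 be integers, N = 2^a·3^b, n ≥ 1. For every choice of indices i_j ∈ {0, …, N−1}, −n ≤ j ≤ n, the atom {x ∈ F : rep(N^m·x) ∈ A_{i_{−m}} for all 0 ≤ m ≤ n, and rep(N^{−m}·x) ∈ A_{i_m} for all 1 ≤ m ≤ n} is nonempty. (In particular the partition {A_0, …, A_{N−1}} satisfies the Markov nonemptiness condition for multiplication by N on G/Γ.) -/
open Set

noncomputable section

/-- The ambient group `G = ℝ × ℚ₂ × ℚ₃`. -/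
abbrev G : Type := ℝ × ℚ_[2] × ℚ_[3]

/-- The diagonal embedding of `ℚ` into `G`. -/
def Δ (r : ℚ) : G := ((r : ℝ), (r : ℚ_[2]), (r : ℚ_[3]))

/-- `ℤ[1/6]`, the rationals expressible with denominator `6^k`. -/
def zInv6 : Set ℚ := {q | ∃ (z : ℤ) (k : ℕ), q = z / 6 ^ k}

/-- `Γ = Δ(ℤ[1/6])`. -/
def Γ : Set G := Δ '' zInv6

/-- The fundamental domain `F = [0,1) × ℤ₂ × ℤ₃`. -/
def F : Set G := {x | x.1 ∈ Set.Ico (0 : ℝ) 1 ∧ ‖x.2.1‖ ≤ 1 ∧ ‖x.2.2‖ ≤ 1}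

/-- Coordinatewise multiplication by a rational on `G`. -/
def act (q : ℚ) (x : G) : G :=
  ((q : ℝ) * x.1, (q : ℚ_[2]) * x.2.1, (q : ℚ_[3]) * x.2.2)

/-- The atom `A_k = [k/N, (k+1)/N) × ℤ₂ × ℤ₃` of the partition `ξ`. -/
def A (N k : ℕ) : Set G :=
  {x | x.1 ∈ Set.Ico ((k : ℝ) / N) (((k : ℝ) + 1) / N) ∧ ‖x.2.1‖ ≤ 1 ∧ ‖x.2.2‖ ≤ 1}

/- ### Auxiliary lemmas -/

lemma norm6_2 : ‖(6 : ℚ_[2])‖ = 1/2 := by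
  have h2 : ‖((2:ℕ) : ℚ_[2])‖ = 1/2 := by rw [Padic.norm_p]; norm_num
  have h3 : ‖((3:ℤ) : ℚ_[2])‖ = 1 := by
    have h1 : ‖((3:ℤ):ℚ_[2])‖ ≤ 1 := Padic.norm_int_le_one 3
    rcases lt_or_eq_of_le h1 with h | h
    · exfalso; have := (Padic.norm_intCast_lt_one_iff (p := 2) (k := 3)).mp h; omega
    · exact h
  have : (6:ℚ_[2]) = ((2:ℕ):ℚ_[2]) * ((3:ℤ):ℚ_[2]) := by push_cast; norm_num
  rw [this, norm_mul, h2, h3]; norm_num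

lemma norm6_3 : ‖(6 : ℚ_[3])‖ = 1/3 := by
  have h2 : ‖((3:ℕ) : ℚ_[3])‖ = 1/3 := by rw [Padic.norm_p]; norm_num
  have h3 : ‖((2:ℤ) : ℚ_[3])‖ = 1 := by
    have h1 : ‖((2:ℤ):ℚ_[3])‖ ≤ 1 := Padic.norm_int_le_one 2
    rcases lt_or_eq_of_le h1 with h | h
    · exfalso; have := (Padic.norm_intCast_lt_one_iff (p := 3) (k := 2)).mp h; omega
    · exact h
  have : (6:ℚ_[3]) = ((3:ℕ):ℚ_[3]) * ((2:ℤ):ℚ_[3]) := by push_cast; norm_num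
  rw [this, norm_mul, h2, h3]; norm_num

lemma zInv6_eq_zero (q : ℚ) (h6 : q ∈ zInv6) (h2 : ‖((q:ℚ):ℚ_[2])‖ ≤ 1)
    (h3 : ‖((q:ℚ):ℚ_[3])‖ ≤ 1) (hr : |(q:ℝ)| < 1) : q = 0 := by
  obtain ⟨z, k, rfl⟩ := h6
  have h6k : ((6:ℚ)^k) ≠ 0 := by positivity
  have hq6 : ((z:ℚ)/6^k) * 6^k = (z:ℚ) := by field_simp
  have e2 : (((z:ℚ)/6^k : ℚ):ℚ_[2]) * (6:ℚ_[2])^k = (z:ℚ_[2]) := by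
    have := congrArg (fun q : ℚ => (q : ℚ_[2])) hq6
    push_cast at this ⊢
    exact this
  have e3 : (((z:ℚ)/6^k : ℚ):ℚ_[3]) * (6:ℚ_[3])^k = (z:ℚ_[3]) := by
    have := congrArg (fun q : ℚ => (q : ℚ_[3])) hq6
    push_cast at this ⊢
    exact this
  have hz2 : ‖(z : ℚ_[2])‖ ≤ (2:ℝ)^(-(k:ℤ)) := by
    rw [← e2, norm_mul, norm_pow, norm6_2]
    calc ‖(((z:ℚ)/6^k : ℚ):ℚ_[2])‖ * (1/2)^k ≤ 1 * (1/2)^k := by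
          apply mul_le_mul_of_nonneg_right h2; positivity
      _ = (2:ℝ)^(-(k:ℤ)) := by rw [one_mul, zpow_neg, zpow_natCast]; simp [one_div]
  have hz3 : ‖(z : ℚ_[3])‖ ≤ (3:ℝ)^(-(k:ℤ)) := by
    rw [← e3, norm_mul, norm_pow, norm6_3]
    calc ‖(((z:ℚ)/6^k : ℚ):ℚ_[3])‖ * (1/3)^k ≤ 1 * (1/3)^k := by
          apply mul_le_mul_of_nonneg_right h3; positivity
      _ = (3:ℝ)^(-(k:ℤ)) := by rw [one_mul, zpow_neg, zpow_natCast]; simp [one_div]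
  have d2 : ((2:ℤ)^k) ∣ z := by
    have := (Padic.norm_int_le_pow_iff_dvd (p := 2) z k).mp (by exact_mod_cast hz2)
    exact_mod_cast this
  have d3 : ((3:ℤ)^k) ∣ z := by
    have := (Padic.norm_int_le_pow_iff_dvd (p := 3) z k).mp (by exact_mod_cast hz3)
    exact_mod_cast this
  have cop : IsCoprime ((2:ℤ)^k) ((3:ℤ)^k) := by
    apply IsCoprime.pow
    rw [Int.isCoprime_iff_gcd_eq_one]
    norm_num
  have d6 : ((6:ℤ)^k) ∣ z := by
    have : ((2:ℤ)^k) * ((3:ℤ)^k) ∣ z := cop.mul_dvd d2 d3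
    have e : ((2:ℤ)^k) * ((3:ℤ)^k) = (6:ℤ)^k := by rw [← mul_pow]; norm_num
    rwa [e] at this
  obtain ⟨w, rfl⟩ := d6
  have hq : ((6:ℤ)^k * w : ℤ) / (6:ℚ)^k = (w : ℚ) := by
    push_cast
    field_simp
  rw [hq] at hr ⊢
  have : |(w:ℝ)| < 1 := hr
  have hw : w = 0 := by
    have h' : ((|w| : ℤ) : ℝ) < 1 := by push_cast; exact this
    have h'' : |w| < 1 := by exact_mod_cast h'
    rw [abs_lt] at h''
    omega
  simp [hw]

lemma zInv6_sub (q1 q2 : ℚ) (h1 : q1 ∈ zInv6) (h2 : q2 ∈ zInv6) : q1 - q2 ∈ zInv6 := by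
  obtain ⟨z1, k1, rfl⟩ := h1
  obtain ⟨z2, k2, rfl⟩ := h2
  refine ⟨z1 * 6^k2 - z2 * 6^k1, k1 + k2, ?_⟩
  push_cast
  field_simp
  ring

lemma Δ_sub (q1 q2 : ℚ) : Δ q1 - Δ q2 = Δ (q1 - q2) := by
  simp only [Δ, Prod.mk_sub_mk]
  push_cast
  rfl

/-- Uniqueness of the representative. -/
lemma rep_unique (rep : G → G) (hrep : ∀ x : G, rep x ∈ F ∧ x - rep x ∈ Γ)
    (y f : G) (hf : f ∈ F) (hd : y - f ∈ Γ) : rep y = f := by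
  obtain ⟨hF, hΓ⟩ := hrep y
  obtain ⟨q1, hq1, e1⟩ := hΓ
  obtain ⟨q2, hq2, e2⟩ := hd
  have key : f - rep y = Δ (q1 - q2) := by
    rw [← Δ_sub, e1, e2]
    abel
  have h1 : (f - rep y).1 = ((q1 - q2 : ℚ) : ℝ) := by rw [key]; rfl
  have h21 : (f - rep y).2.1 = ((q1 - q2 : ℚ) : ℚ_[2]) := by rw [key]; rfl
  have h22 : (f - rep y).2.2 = ((q1 - q2 : ℚ) : ℚ_[3]) := by rw [key]; rfl
  have hq0 : q1 - q2 = 0 := by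
    apply zInv6_eq_zero _ (zInv6_sub _ _ hq1 hq2)
    · rw [← h21]
      show ‖f.2.1 - (rep y).2.1‖ ≤ 1
      rw [sub_eq_add_neg]
      refine (Padic.nonarchimedean _ _).trans ?_
      rw [norm_neg]
      exact max_le hf.2.1 hF.2.1
    · rw [← h22]
      show ‖f.2.2 - (rep y).2.2‖ ≤ 1
      rw [sub_eq_add_neg]
      refine (Padic.nonarchimedean _ _).trans ?_
      rw [norm_neg]
      exact max_le hf.2.2 hF.2.2
    · rw [← h1]
      show |f.1 - (rep y).1| < 1
      rw [abs_sub_lt_iff]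
      constructor
      · linarith [hf.1.2, hF.1.1]
      · linarith [hF.1.2, hf.1.1]
  have : f - rep y = 0 := by rw [key, hq0]; simp [Δ]
  have := sub_eq_zero.mp this
  exact this.symm

/-- Sum of base-`N` digit tail. -/
def sumdig (N : ℕ) (L : ℕ) (d : ℕ → ℕ) : ℚ := ∑ j ∈ Finset.range L, (d j : ℚ) / (N:ℚ)^(j+1)

lemma sumdig_nonneg (N L : ℕ) (d : ℕ → ℕ) : 0 ≤ sumdig N L d := by
  apply Finset.sum_nonneg
  intro j _
  positivity

lemma sumdig_succ (N L : ℕ) (d : ℕ → ℕ) (hN : 0 < N) :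
    sumdig N (L+1) d = (d 0 : ℚ) / N + (1/(N:ℚ)) * sumdig N L (fun j => d (j+1)) := by
  have hNq : ((N:ℚ)) ≠ 0 := by positivity
  rw [sumdig, Finset.sum_range_succ']
  have h0 : ((d 0 : ℚ)) / (N:ℚ)^(0+1) = (d 0 : ℚ) / N := by norm_num
  rw [h0, add_comm, sumdig, Finset.mul_sum]
  congr 1
  apply Finset.sum_congr rfl
  intro j _
  rw [eq_comm, one_div, inv_mul_eq_div, div_div, ← pow_succ]

lemma sumdig_succ2 (N L : ℕ) (d d' : ℕ → ℕ) (k0 : ℕ) (hN : 0 < N) (h0 : d 0 = k0)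
    (hd' : ∀ j, d (j+1) = d' j) :
    sumdig N (L+1) d = (k0:ℚ)/N + (1/(N:ℚ)) * sumdig N L d' := by
  rw [sumdig_succ N L d hN, h0]
  have hfun : (fun j => d (j+1)) = d' := funext hd'
  rw [hfun]

lemma sumdig_lt_one (N : ℕ) (hN : 0 < N) : ∀ (L : ℕ) (d : ℕ → ℕ), (∀ j, j < L → d j < N) →
    sumdig N L d < 1 := by
  intro L
  induction L with
  | zero => intro d _; simp [sumdig]
  | succ L ih =>
    intro d hd
    rw [sumdig_succ N L d hN]
    have h1 : sumdig N L (fun j => d (j+1)) < 1 := ih _ (fun j hj => hd (j+1) (by omega))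
    have h0 : (d 0 : ℚ) + 1 ≤ (N:ℚ) := by
      have := hd 0 (by omega)
      exact_mod_cast this
    have hNq : (0:ℚ) < (N:ℚ) := by exact_mod_cast hN
    calc (d 0 : ℚ) / N + (1/(N:ℚ)) * sumdig N L (fun j => d (j+1))
        < (d 0 : ℚ) / N + (1/(N:ℚ)) * 1 := by
          apply add_lt_add_right
          apply mul_lt_mul_of_pos_left h1
          positivity
      _ = ((d 0 : ℚ) + 1) / N := by rw [mul_one]; ring
      _ ≤ (N:ℚ) / N := by gcongr
      _ = 1 := by field_simp

/-- Every atom of the refined partition `⋁_{j=-n}^n α^j(ξ)` is nonempty: the Markov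
nonemptiness condition for the partition `{A_0, …, A_{N-1}}` under multiplication
by `N` on `G/Γ`. -/
theorem refined_atom_nonempty (rep : G → G) (hrep : ∀ x : G, rep x ∈ F ∧ x - rep x ∈ Γ)
    (a b : ℕ) (ha : 1 ≤ a) (hb : 1 ≤ b) (N : ℕ) (hN : N = 2 ^ a * 3 ^ b)
    (n : ℕ) (hn : 1 ≤ n) (i : ℤ → ℕ) (hi : ∀ j : ℤ, -(n : ℤ) ≤ j → j ≤ n → i j < N) :
    {x : G | x ∈ F ∧
        (∀ m : ℕ, m ≤ n → rep (act ((N : ℚ) ^ (m : ℤ)) x) ∈ A N (i (-(m : ℤ)))) ∧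
        (∀ m : ℕ, 1 ≤ m → m ≤ n →
          rep (act ((N : ℚ) ^ (-(m : ℤ))) x) ∈ A N (i (m : ℤ)))}.Nonempty := by
  have hN0 : 0 < N := by rw [hN]; positivity
  have hNpos : (0:ℚ) < (N:ℚ) := by exact_mod_cast hN0
  have hNne : ((N:ℚ)) ≠ 0 := ne_of_gt hNpos
  set r : ℚ := sumdig N (n+1) (fun k => i (-(k:ℤ))) with hr_def
  set D : ℕ → ℕ := fun m => ∑ k ∈ Finset.range m, i ((k:ℤ)+1) * N^k with hD_def
  set c : ℤ := (N:ℤ)^n - (D n : ℤ) with hc_def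
  set x : G := ((r:ℝ), ((c:ℤ):ℚ_[2]), ((c:ℤ):ℚ_[3])) with hx_def
  have hr0 : 0 ≤ r := sumdig_nonneg _ _ _
  have hr1 : r < 1 := by
    apply sumdig_lt_one N hN0
    intro j hj
    apply hi
    · push_cast; omega
    · push_cast; omega
  have hD : ∀ m : ℕ, m ≤ n → D m < N ^ m := by
    intro m
    induction m with
    | zero => intro _; simp [hD_def]
    | succ m ih =>
      intro hm
      have h1 : D m < N ^ m := ih (by omega)
      have h2 : D (m+1) = D m + i ((m:ℤ)+1) * N^m := by
        simp only [hD_def]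
        rw [Finset.sum_range_succ]
      have h3 : i ((m:ℤ)+1) * N^m ≤ (N-1) * N^m := by
        apply Nat.mul_le_mul_right
        have : i ((m:ℤ)+1) < N := by
          apply hi
          · push_cast; omega
          · push_cast; omega
        omega
      have h4 : (N-1) * N^m = N * N^m - N^m := by rw [Nat.sub_mul, one_mul]
      have h5 : N^m ≤ N * N^m := Nat.le_mul_of_pos_left _ hN0
      have h6 : N ^ (m+1) = N^m * N := pow_succ N m
      have h7 : 0 < N ^ m := Nat.pow_pos hN0
      have h8 : N^m * N = N * N^m := Nat.mul_comm _ _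
      omega
  have key_fwd : ∀ m : ℕ, m ≤ n →
      ∃ P : ℕ, (N:ℚ)^m * r = P + sumdig N (n+1-m) (fun j => i (-((m+j : ℕ):ℤ))) := by
    intro m
    induction m with
    | zero =>
      intro _
      refine ⟨0, ?_⟩
      have hfun : (fun j : ℕ => i (-((0+j:ℕ):ℤ))) = (fun k : ℕ => i (-(k:ℤ))) := by
        funext j
        norm_num
      rw [hfun]
      simp only [Nat.sub_zero]
      rw [← hr_def]
      norm_num
    | succ m ih =>
      intro hm
      obtain ⟨P, hP⟩ := ih (by omega)
      have hL : n + 1 - m = (n - m) + 1 := by omega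
      have hstep : sumdig N (n+1-m) (fun j => i (-((m+j:ℕ):ℤ)))
          = (i (-(m:ℤ)) : ℚ)/N + (1/(N:ℚ)) * sumdig N (n-m) (fun j => i (-(((m+1)+j:ℕ):ℤ))) := by
        rw [hL]
        refine sumdig_succ2 N (n-m) _ _ _ hN0 (by norm_num) (fun j => ?_)
        show i (-((m+(j+1):ℕ):ℤ)) = i (-(((m+1)+j:ℕ):ℤ))
        congr 1
        push_cast
        ring
      refine ⟨N * P + i (-(m:ℤ)), ?_⟩
      have he : (N:ℚ)^(m+1) * r = (N:ℚ) * ((N:ℚ)^m * r) := by ring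
      have hL2 : n + 1 - (m+1) = n - m := by omega
      rw [he, hP, hstep, hL2]
      push_cast
      field_simp
      ring
  have hxF : x ∈ F := by
    refine ⟨⟨?_, ?_⟩, ?_, ?_⟩
    · show (0:ℝ) ≤ ((r:ℚ):ℝ)
      exact_mod_cast hr0
    · show ((r:ℚ):ℝ) < 1
      exact_mod_cast hr1
    · exact Padic.norm_int_le_one c
    · exact Padic.norm_int_le_one c
  refine ⟨x, hxF, ?_, ?_⟩
  · -- forward orbit
    intro m hm
    obtain ⟨P, hP⟩ := key_fwd m hm
    set dm : ℕ → ℕ := fun j => i (-((m+j:ℕ):ℤ)) with hdm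
    set ε : ℚ := sumdig N (n+1-m) dm with hε
    have hL : n+1-m = (n-m)+1 := by omega
    have hd0 : dm 0 = i (-(m:ℤ)) := by simp [hdm]
    have hεsplit : ε = (i (-(m:ℤ)):ℚ)/N + (1/(N:ℚ)) * sumdig N (n-m) (fun j => dm (j+1)) := by
      rw [hε, hL]
      exact sumdig_succ2 N (n-m) dm _ _ hN0 hd0 (fun j => rfl)
    have hS0 : 0 ≤ sumdig N (n-m) (fun j => dm (j+1)) := sumdig_nonneg _ _ _
    have hS1 : sumdig N (n-m) (fun j => dm (j+1)) < 1 := by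
      apply sumdig_lt_one N hN0
      intro j hj
      simp only [hdm]
      apply hi
      · push_cast; omega
      · push_cast; omega
    have hεlow : (i (-(m:ℤ)):ℚ)/N ≤ ε := by
      rw [hεsplit]
      have : 0 ≤ (1/(N:ℚ)) * sumdig N (n-m) (fun j => dm (j+1)) := by positivity
      linarith
    have hεhigh : ε < ((i (-(m:ℤ)):ℚ)+1)/N := by
      rw [hεsplit]
      have h1 : (1/(N:ℚ)) * sumdig N (n-m) (fun j => dm (j+1)) < (1/(N:ℚ)) * 1 := by
        apply mul_lt_mul_of_pos_left hS1
        positivity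
      have h2 : ((i (-(m:ℤ)):ℚ)+1)/N = (i (-(m:ℤ)):ℚ)/N + (1/(N:ℚ))*1 := by
        field_simp
      linarith
    have hε1 : ε < 1 := by
      have hiN : i (-(m:ℤ)) < N := by
        apply hi
        · push_cast; omega
        · push_cast; omega
      have : ((i (-(m:ℤ)):ℚ)+1)/N ≤ 1 := by
        rw [div_le_one hNpos]
        exact_mod_cast hiN
      linarith
    have hε0 : 0 ≤ ε := sumdig_nonneg _ _ _
    set f : G := (((ε:ℚ):ℝ), (((N:ℤ)^m * c - P : ℤ):ℚ_[2]), (((N:ℤ)^m * c - P : ℤ):ℚ_[3])) with hf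
    have hfF : f ∈ F := by
      refine ⟨⟨?_, ?_⟩, ?_, ?_⟩
      · show (0:ℝ) ≤ ((ε:ℚ):ℝ)
        exact_mod_cast hε0
      · show ((ε:ℚ):ℝ) < 1
        exact_mod_cast hε1
      · exact Padic.norm_int_le_one _
      · exact Padic.norm_int_le_one _
    have hP' : (N:ℚ)^m * r - ε = (P:ℚ) := by rw [hP]; ring
    have hrep_eq : rep (act ((N : ℚ) ^ ((m:ℕ) : ℤ)) x) = f := by
      apply rep_unique rep hrep _ _ hfF
      refine ⟨(P:ℚ), ⟨(P:ℤ), 0, by push_cast; norm_num⟩, ?_⟩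
      rw [show ((N:ℚ)) ^ ((m:ℕ) : ℤ) = ((N:ℚ))^m from zpow_natCast _ _]
      rw [hx_def, hf]
      simp only [act, Δ, Prod.mk_sub_mk]
      refine Prod.ext ?_ (Prod.ext ?_ ?_)
      · have h := congrArg (fun s : ℚ => (s:ℝ)) hP'
        push_cast at h ⊢
        linear_combination -h
      · show ((P:ℚ):ℚ_[2]) = _
        push_cast
        ring
      · show ((P:ℚ):ℚ_[3]) = _
        push_cast
        ring
    rw [hrep_eq]
    refine ⟨⟨?_, ?_⟩, ?_, ?_⟩
    · show ((i (-(m:ℤ)) : ℕ):ℝ)/((N:ℕ):ℝ) ≤ ((ε:ℚ):ℝ)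
      have h := (Rat.cast_le (K := ℝ)).mpr hεlow
      rwa [Rat.cast_div, Rat.cast_natCast, Rat.cast_natCast] at h
    · show ((ε:ℚ):ℝ) < (((i (-(m:ℤ)) : ℕ):ℝ)+1)/((N:ℕ):ℝ)
      have h := (Rat.cast_lt (K := ℝ)).mpr hεhigh
      rwa [Rat.cast_div, Rat.cast_add, Rat.cast_natCast, Rat.cast_one, Rat.cast_natCast] at h
    · exact Padic.norm_int_le_one _
    · exact Padic.norm_int_le_one _
  · -- backward orbit
    intro m hm1 hmn
    obtain ⟨m', rfl⟩ : ∃ m', m = m' + 1 := ⟨m - 1, by omega⟩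
    set E : ℕ := ∑ k ∈ Finset.range (n-(m'+1)), i (((m'+1:ℕ):ℤ)+1+k) * N^k with hE_def
    set qm : ℤ := (N:ℤ)^(n-(m'+1)) - (E:ℤ) with hqm_def
    have hsplit : D n = D (m'+1) + N^(m'+1) * E := by
      have h1 : ∑ k ∈ Finset.range n, i ((k:ℤ)+1) * N^k
          = ∑ k ∈ Finset.range (m'+1), i ((k:ℤ)+1) * N^k
            + ∑ k ∈ Finset.Ico (m'+1) n, i ((k:ℤ)+1) * N^k := by
        rw [Finset.range_eq_Ico, ← Finset.sum_Ico_consecutive _ (Nat.zero_le (m'+1)) hmn,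
          ← Finset.range_eq_Ico]
      have h2 : ∑ k ∈ Finset.Ico (m'+1) n, i ((k:ℤ)+1) * N^k
          = ∑ k ∈ Finset.range (n-(m'+1)), i ((((m'+1)+k:ℕ):ℤ)+1) * N^((m'+1)+k) :=
        Finset.sum_Ico_eq_sum_range _ _ _
      have h3 : ∑ k ∈ Finset.range (n-(m'+1)), i ((((m'+1)+k:ℕ):ℤ)+1) * N^((m'+1)+k)
          = N^(m'+1) * ∑ k ∈ Finset.range (n-(m'+1)), i (((m'+1:ℕ):ℤ)+1+k) * N^k := by
        rw [Finset.mul_sum]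
        apply Finset.sum_congr rfl
        intro k _
        have hcast : (((m'+1)+k : ℕ):ℤ) + 1 = ((m'+1:ℕ):ℤ) + 1 + k := by push_cast; ring
        rw [hcast, pow_add]
        ring
      simp only [hD_def, hE_def]
      rw [h1, h2, h3]
    have hc2 : c = qm * (N:ℤ)^(m'+1) - (D (m'+1) : ℤ) := by
      have h1 : (n-(m'+1)) + (m'+1) = n := by omega
      have h2 : (N:ℤ)^(n-(m'+1)) * (N:ℤ)^(m'+1) = (N:ℤ)^n := by rw [← pow_add, h1]
      have h3 : ((D n : ℕ):ℤ) = (D (m'+1):ℤ) + (N:ℤ)^(m'+1) * (E:ℤ) := by exact_mod_cast hsplit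
      rw [hc_def, hqm_def, h3]
      linear_combination -h2
    set t : ℚ := -(D (m'+1) : ℚ)/(N:ℚ)^(m'+1) with ht_def
    have htz : t ∈ zInv6 := by
      have hw : (6:ℤ)^((a+b)*(m'+1)) = (N:ℤ)^(m'+1) * (2^(b*(m'+1)) * 3^(a*(m'+1))) := by
        have hNZ : (N:ℤ) = 2^a * 3^b := by rw [hN]; push_cast; ring
        rw [hNZ, mul_pow, ← pow_mul, ← pow_mul,
          show (6:ℤ) = 2*3 by norm_num, mul_pow, mul_mul_mul_comm, ← pow_add, ← pow_add]
        congr 2 <;> ring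
      refine ⟨-(D (m'+1):ℤ) * (2^(b*(m'+1)) * 3^(a*(m'+1))), (a+b)*(m'+1), ?_⟩
      have hw' : ((6:ℚ))^((a+b)*(m'+1))
          = ((N:ℚ))^(m'+1) * ((2:ℚ)^(b*(m'+1)) * (3:ℚ)^(a*(m'+1))) := by exact_mod_cast hw
      rw [ht_def, hw']
      push_cast
      have h2 : (0:ℚ) < (2:ℚ)^(b*(m'+1)) * (3:ℚ)^(a*(m'+1)) := by positivity
      field_simp
    set f : G := ((((((D (m'+1):ℚ) + r)/(N:ℚ)^(m'+1)) : ℚ):ℝ), ((qm:ℤ):ℚ_[2]), ((qm:ℤ):ℚ_[3]))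
      with hf
    have hDm : (D (m'+1) : ℚ) + 1 ≤ (N:ℚ)^(m'+1) := by exact_mod_cast hD (m'+1) hmn
    have hNm : (0:ℚ) < (N:ℚ)^(m'+1) := by positivity
    have hfF : f ∈ F := by
      refine ⟨⟨?_, ?_⟩, ?_, ?_⟩
      · show (0:ℝ) ≤ ((((D (m'+1):ℚ) + r)/(N:ℚ)^(m'+1) : ℚ):ℝ)
        have : (0:ℚ) ≤ ((D (m'+1):ℚ) + r)/(N:ℚ)^(m'+1) := by positivity
        exact_mod_cast this
      · show ((((D (m'+1):ℚ) + r)/(N:ℚ)^(m'+1) : ℚ):ℝ) < 1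
        have : ((D (m'+1):ℚ) + r)/(N:ℚ)^(m'+1) < 1 := by
          rw [div_lt_one hNm]
          linarith
        exact_mod_cast this
      · exact Padic.norm_int_le_one _
      · exact Padic.norm_int_le_one _
    have hzp : ((N:ℚ))^(-(((m'+1:ℕ)):ℤ)) = ((N:ℚ)^(m'+1))⁻¹ := by
      rw [zpow_neg, zpow_natCast]
    have I1 : ((N:ℚ)^(m'+1))⁻¹ * r - ((D (m'+1):ℚ) + r)/(N:ℚ)^(m'+1) = t := by
      rw [ht_def]
      field_simp
      ring
    have I2 : ((N:ℚ)^(m'+1))⁻¹ * (c:ℚ) - (qm:ℚ) = t := by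
      rw [ht_def]
      have hcq : (c:ℚ) = (qm:ℚ) * (N:ℚ)^(m'+1) - (D (m'+1) : ℚ) := by exact_mod_cast hc2
      rw [hcq]
      field_simp
      ring
    have hrep_eq : rep (act ((N : ℚ) ^ (-(((m'+1:ℕ)) : ℤ))) x) = f := by
      apply rep_unique rep hrep _ _ hfF
      refine ⟨t, htz, ?_⟩
      rw [hzp]
      rw [hx_def, hf]
      simp only [act, Δ, Prod.mk_sub_mk]
      refine Prod.ext ?_ (Prod.ext ?_ ?_)
      · have h := congrArg (fun s : ℚ => (s:ℝ)) I1
        push_cast at h ⊢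
        linear_combination -h
      · have h := congrArg (fun s : ℚ => (s:ℚ_[2])) I2
        push_cast at h ⊢
        linear_combination -h
      · have h := congrArg (fun s : ℚ => (s:ℚ_[3])) I2
        push_cast at h ⊢
        linear_combination -h
    rw [hrep_eq]
    have hDsucc : D (m'+1) = D m' + i (((m'+1:ℕ)):ℤ) * N^m' := by
      have hcast : (((m'+1:ℕ)):ℤ) = (m':ℤ)+1 := by push_cast; ring
      simp only [hD_def]
      rw [Finset.sum_range_succ, hcast]
    have hDm' : (D m' : ℚ) + 1 ≤ (N:ℚ)^m' := by exact_mod_cast hD m' (by omega)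
    have hDq : (D (m'+1) : ℚ) = (D m' : ℚ) + (i (((m'+1:ℕ)):ℤ) : ℚ) * (N:ℚ)^m' := by
      exact_mod_cast hDsucc
    have hlow : (i (((m'+1:ℕ)):ℤ) : ℚ) * (N:ℚ)^m' ≤ (D (m'+1):ℚ) + r := by
      have : (0:ℚ) ≤ (D m' : ℚ) := by positivity
      linarith
    have hhigh : (D (m'+1):ℚ) + r < ((i (((m'+1:ℕ)):ℤ) : ℚ) + 1) * (N:ℚ)^m' := by
      linarith
    have hNm' : (0:ℚ) < (N:ℚ)^m' := by positivity
    have hb1 : (i (((m'+1:ℕ)):ℤ) : ℚ)/N ≤ ((D (m'+1):ℚ)+r)/(N:ℚ)^(m'+1) := by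
      rw [div_le_div_iff₀ hNpos hNm, pow_succ]
      calc (i (((m'+1:ℕ)):ℤ) : ℚ) * ((N:ℚ)^m' * N)
          = ((i (((m'+1:ℕ)):ℤ) : ℚ) * (N:ℚ)^m')*N := by ring
        _ ≤ ((D (m'+1):ℚ)+r)*N := by
            apply mul_le_mul_of_nonneg_right hlow (le_of_lt hNpos)
    have hb2 : ((D (m'+1):ℚ)+r)/(N:ℚ)^(m'+1) < ((i (((m'+1:ℕ)):ℤ) : ℚ)+1)/N := by
      rw [div_lt_div_iff₀ hNm hNpos, pow_succ]
      calc ((D (m'+1):ℚ)+r)*N < (((i (((m'+1:ℕ)):ℤ) : ℚ)+1) * (N:ℚ)^m')*N := by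
            apply mul_lt_mul_of_pos_right hhigh hNpos
        _ = ((i (((m'+1:ℕ)):ℤ) : ℚ)+1) * ((N:ℚ)^m' * N) := by ring
    refine ⟨⟨?_, ?_⟩, ?_, ?_⟩
    · show ((i (((m'+1:ℕ)):ℤ) : ℕ):ℝ)/((N:ℕ):ℝ) ≤ ((((D (m'+1):ℚ) + r)/(N:ℚ)^(m'+1) : ℚ):ℝ)
      have h := (Rat.cast_le (K := ℝ)).mpr hb1
      push_cast at h ⊢
      exact h
    · show ((((D (m'+1):ℚ) + r)/(N:ℚ)^(m'+1) : ℚ):ℝ)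
        < (((i (((m'+1:ℕ)):ℤ) : ℕ):ℝ)+1)/((N:ℕ):ℝ)
      have h := (Rat.cast_lt (K := ℝ)).mpr hb2
      push_cast at h ⊢
      exact h
    · exact Padic.norm_int_le_one _
    · exact Padic.norm_int_le_one _
end
end

section
/- Let a, b ≥ 1 be integers and N = 2^a·3^b. The partition {A_0, …, A_{N−1}} of F is generating for multiplication by N on G/Γ in the following sense: if x, y ∈ F are such that for every j ∈ ℤ and every 0 ≤ k < N one has rep(N^j·x) ∈ A_k if and only if rep(N^j·y) ∈ A_k, then x = y. -/
open Set

noncomputable section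

lemma dvd_aux (p : ℕ) [hpf : Fact p.Prime] (hp : (p : ℤ) ∣ 6) (z : ℤ) (k : ℕ)
    (h : ‖(((z : ℚ) / 6 ^ (k + 1) : ℚ) : ℚ_[p])‖ ≤ 1) : (p : ℤ) ∣ z := by
  have h6lt : ‖((6 : ℤ) : ℚ_[p])‖ < 1 := (Padic.norm_intCast_lt_one_iff (k := 6)).2 hp
  have h60 : ((6 : ℚ_[p])) ^ (k + 1) ≠ 0 := pow_ne_zero _ (by norm_num)
  have hzeq : ((z : ℤ) : ℚ_[p]) = (6 : ℚ_[p]) ^ (k + 1) * (((z : ℚ) / 6 ^ (k + 1) : ℚ) : ℚ_[p]) := by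
    push_cast
    field_simp
  have hlt : ‖((z : ℤ) : ℚ_[p])‖ < 1 := by
    rw [hzeq, norm_mul]
    have h6lt' : ‖(6 : ℚ_[p])‖ < 1 := by simpa using h6lt
    calc ‖(6 : ℚ_[p]) ^ (k + 1)‖ * ‖(((z : ℚ) / 6 ^ (k + 1) : ℚ) : ℚ_[p])‖
        ≤ ‖(6 : ℚ_[p]) ^ (k + 1)‖ * 1 := mul_le_mul_of_nonneg_left h (norm_nonneg _)
      _ = ‖(6 : ℚ_[p])‖ ^ (k + 1) := by rw [mul_one, norm_pow]
      _ ≤ ‖(6 : ℚ_[p])‖ ^ 1 := pow_le_pow_of_le_one (norm_nonneg _) h6lt'.le (by omega)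
      _ < 1 := by simpa using h6lt'
  exact (Padic.norm_intCast_lt_one_iff (k := z)).mp hlt

lemma zInv6_int (q : ℚ) (hq : q ∈ zInv6)
    (h2 : ‖(q : ℚ_[2])‖ ≤ 1) (h3 : ‖(q : ℚ_[3])‖ ≤ 1) : ∃ z : ℤ, q = z := by
  obtain ⟨z, k, rfl⟩ := hq
  induction k generalizing z with
  | zero => exact ⟨z, by norm_num⟩
  | succ k ih =>
    have hz2 : (2 : ℤ) ∣ z := by exact_mod_cast dvd_aux 2 (by norm_num) z k h2
    have hz3 : (3 : ℤ) ∣ z := by exact_mod_cast dvd_aux 3 (by norm_num) z k h3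
    have h6z : (6 : ℤ) ∣ z := by omega
    obtain ⟨z', rfl⟩ := h6z
    have heq : ((6 * z' : ℤ) : ℚ) / 6 ^ (k + 1) = (z' : ℚ) / 6 ^ k := by
      push_cast
      field_simp
      ring
    rw [heq] at h2 h3 ⊢
    exact ih z' h2 h3

lemma nonarch {p : ℕ} [Fact p.Prime] (a b : ℚ_[p]) : ‖a - b‖ ≤ max ‖a‖ ‖b‖ := by
  have := Padic.nonarchimedean a (-b)
  simpa [sub_eq_add_neg] using this

lemma rep_decomp (rep : G → G) (hrep : ∀ x : G, rep x ∈ F ∧ x - rep x ∈ Γ) (z : G) :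
    ∃ q ∈ zInv6, (rep z).1 = z.1 - (q : ℝ) ∧ (rep z).2.1 = z.2.1 - (q : ℚ_[2]) ∧
      (rep z).2.2 = z.2.2 - (q : ℚ_[3]) := by
  obtain ⟨q, hq6, hΔ⟩ := (hrep z).2
  refine ⟨q, hq6, ?_, ?_, ?_⟩ <;>
    · have h1 := congrArg Prod.fst hΔ
      have h2 := congrArg (fun w : G => w.2.1) hΔ
      have h3 := congrArg (fun w : G => w.2.2) hΔ
      simp [Δ] at h1 h2 h3
      first
      | (rw [h1]; ring)
      | (rw [h2]; ring)
      | (rw [h3]; ring)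

lemma rep_forward (rep : G → G) (hrep : ∀ x : G, rep x ∈ F ∧ x - rep x ∈ Γ)
    (N : ℕ) (x : G) (hx : x ∈ F) (m : ℕ) :
    (rep (act ((N : ℚ) ^ (m : ℤ)) x)).1 = Int.fract ((N : ℝ) ^ m * x.1) := by
  set z := act ((N : ℚ) ^ (m : ℤ)) x with hz
  obtain ⟨q, hq6, h1, h2, h3⟩ := rep_decomp rep hrep z
  have hz1 : z.1 = (N : ℝ) ^ m * x.1 := by simp [hz, act]
  have hz2 : z.2.1 = (N : ℚ_[2]) ^ m * x.2.1 := by simp [hz, act]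
  have hz3 : z.2.2 = (N : ℚ_[3]) ^ m * x.2.2 := by simp [hz, act]
  have hRF := (hrep z).1
  have hNle2 : ‖(N : ℚ_[2])‖ ≤ 1 := by
    have := Padic.norm_int_le_one (p := 2) (N : ℤ)
    simpa using this
  have hNle3 : ‖(N : ℚ_[3])‖ ≤ 1 := by
    have := Padic.norm_int_le_one (p := 3) (N : ℤ)
    simpa using this
  have hq2 : ‖(q : ℚ_[2])‖ ≤ 1 := by
    have hqe : (q : ℚ_[2]) = (N : ℚ_[2]) ^ m * x.2.1 - (rep z).2.1 := by
      rw [h2, hz2]; ring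
    rw [hqe]
    refine le_trans (nonarch _ _) (max_le ?_ hRF.2.1)
    calc ‖(N : ℚ_[2]) ^ m * x.2.1‖ = ‖(N : ℚ_[2])‖ ^ m * ‖x.2.1‖ := by rw [norm_mul, norm_pow]
      _ ≤ 1 * 1 := by
          exact mul_le_mul (pow_le_one₀ (norm_nonneg _) hNle2) hx.2.1 (norm_nonneg _)
            zero_le_one
      _ = 1 := by ring
  have hq3 : ‖(q : ℚ_[3])‖ ≤ 1 := by
    have hqe : (q : ℚ_[3]) = (N : ℚ_[3]) ^ m * x.2.2 - (rep z).2.2 := by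
      rw [h3, hz3]; ring
    rw [hqe]
    refine le_trans (nonarch _ _) (max_le ?_ hRF.2.2)
    calc ‖(N : ℚ_[3]) ^ m * x.2.2‖ = ‖(N : ℚ_[3])‖ ^ m * ‖x.2.2‖ := by rw [norm_mul, norm_pow]
      _ ≤ 1 * 1 := by
          exact mul_le_mul (pow_le_one₀ (norm_nonneg _) hNle3) hx.2.2 (norm_nonneg _)
            zero_le_one
      _ = 1 := by ring
  obtain ⟨w, rfl⟩ := zInv6_int q hq6 hq2 hq3
  have : (N : ℝ) ^ m * x.1 = (rep z).1 + (w : ℝ) := by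
    rw [h1, hz1]; push_cast; ring
  rw [this, Int.fract_add_intCast, Int.fract_eq_self.2 ⟨hRF.1.1, hRF.1.2⟩]

lemma rep_backward (rep : G → G) (hrep : ∀ x : G, rep x ∈ F ∧ x - rep x ∈ Γ)
    (N : ℕ) (hN : 0 < N) (x : G) (hx : x ∈ F) (m : ℕ) :
    ∃ w : ℤ, (rep (act ((N : ℚ) ^ (-(m : ℤ))) x)).1 = (x.1 - (w : ℝ)) / (N : ℝ) ^ m
      ∧ ‖x.2.1 - (w : ℚ_[2])‖ ≤ ‖(N : ℚ_[2])‖ ^ m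
      ∧ ‖x.2.2 - (w : ℚ_[3])‖ ≤ ‖(N : ℚ_[3])‖ ^ m := by
  set z := act ((N : ℚ) ^ (-(m : ℤ))) x with hz
  obtain ⟨q, hq6, h1, h2, h3⟩ := rep_decomp rep hrep z
  have hRF := (hrep z).1
  have hNQ : (N : ℚ) ≠ 0 := Nat.cast_ne_zero.mpr hN.ne'
  have hN2 : (N : ℚ_[2]) ≠ 0 := Nat.cast_ne_zero.mpr hN.ne'
  have hN3 : (N : ℚ_[3]) ≠ 0 := Nat.cast_ne_zero.mpr hN.ne'
  have hNR : (N : ℝ) ≠ 0 := Nat.cast_ne_zero.mpr hN.ne'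
  have hc1 : (((N : ℚ) ^ (-(m : ℤ)) : ℚ) : ℝ) = ((N : ℝ) ^ m)⁻¹ := by
    push_cast
    rw [zpow_neg, zpow_natCast]
  have hc2 : (((N : ℚ) ^ (-(m : ℤ)) : ℚ) : ℚ_[2]) = ((N : ℚ_[2]) ^ m)⁻¹ := by
    push_cast
    rw [zpow_neg, zpow_natCast]
  have hc3 : (((N : ℚ) ^ (-(m : ℤ)) : ℚ) : ℚ_[3]) = ((N : ℚ_[3]) ^ m)⁻¹ := by
    push_cast
    rw [zpow_neg, zpow_natCast]
  have hz1 : z.1 = x.1 / (N : ℝ) ^ m := by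
    rw [hz]; show (((N : ℚ) ^ (-(m : ℤ)) : ℚ) : ℝ) * x.1 = _
    rw [hc1]; ring
  have hz2 : z.2.1 = ((N : ℚ_[2]) ^ m)⁻¹ * x.2.1 := by
    rw [hz]; show (((N : ℚ) ^ (-(m : ℤ)) : ℚ) : ℚ_[2]) * x.2.1 = _
    rw [hc2]
  have hz3 : z.2.2 = ((N : ℚ_[3]) ^ m)⁻¹ * x.2.2 := by
    rw [hz]; show (((N : ℚ) ^ (-(m : ℤ)) : ℚ) : ℚ_[3]) * x.2.2 = _
    rw [hc3]
  set wq : ℚ := (N : ℚ) ^ m * q with hwq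
  have hwq6 : wq ∈ zInv6 := by
    obtain ⟨z0, k, hz0⟩ := hq6
    exact ⟨(N : ℤ) ^ m * z0, k, by rw [hwq, hz0]; push_cast; ring⟩
  have hkey2 : (wq : ℚ_[2]) = x.2.1 - (N : ℚ_[2]) ^ m * (rep z).2.1 := by
    rw [h2, hz2, hwq]
    push_cast
    field_simp
    ring
  have hkey3 : (wq : ℚ_[3]) = x.2.2 - (N : ℚ_[3]) ^ m * (rep z).2.2 := by
    rw [h3, hz3, hwq]
    push_cast
    field_simp
    ring
  have hNle2 : ‖(N : ℚ_[2])‖ ≤ 1 := by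
    have := Padic.norm_int_le_one (p := 2) (N : ℤ); simpa using this
  have hNle3 : ‖(N : ℚ_[3])‖ ≤ 1 := by
    have := Padic.norm_int_le_one (p := 3) (N : ℤ); simpa using this
  have hb2 : ‖(N : ℚ_[2]) ^ m * (rep z).2.1‖ ≤ ‖(N : ℚ_[2])‖ ^ m := by
    rw [norm_mul, norm_pow]
    calc ‖(N : ℚ_[2])‖ ^ m * ‖(rep z).2.1‖ ≤ ‖(N : ℚ_[2])‖ ^ m * 1 :=
          mul_le_mul_of_nonneg_left hRF.2.1 (by positivity)
      _ = ‖(N : ℚ_[2])‖ ^ m := mul_one _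
  have hb3 : ‖(N : ℚ_[3]) ^ m * (rep z).2.2‖ ≤ ‖(N : ℚ_[3])‖ ^ m := by
    rw [norm_mul, norm_pow]
    calc ‖(N : ℚ_[3])‖ ^ m * ‖(rep z).2.2‖ ≤ ‖(N : ℚ_[3])‖ ^ m * 1 :=
          mul_le_mul_of_nonneg_left hRF.2.2 (by positivity)
      _ = ‖(N : ℚ_[3])‖ ^ m := mul_one _
  have hwq2 : ‖(wq : ℚ_[2])‖ ≤ 1 := by
    rw [hkey2]
    refine le_trans (nonarch _ _) (max_le hx.2.1 ?_)
    exact le_trans hb2 (pow_le_one₀ (norm_nonneg _) hNle2)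
  have hwq3 : ‖(wq : ℚ_[3])‖ ≤ 1 := by
    rw [hkey3]
    refine le_trans (nonarch _ _) (max_le hx.2.2 ?_)
    exact le_trans hb3 (pow_le_one₀ (norm_nonneg _) hNle3)
  obtain ⟨w, hw⟩ := zInv6_int wq hwq6 hwq2 hwq3
  refine ⟨w, ?_, ?_, ?_⟩
  · rw [h1, hz1]
    have hqw : (q : ℝ) = (w : ℝ) / (N : ℝ) ^ m := by
      have : q = (w : ℚ) / (N : ℚ) ^ m := by
        rw [← hw, hwq]; field_simp
      rw [this]; push_cast; ring
    rw [hqw]; ring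
  · have : x.2.1 - (w : ℚ_[2]) = (N : ℚ_[2]) ^ m * (rep z).2.1 := by
      have := hkey2
      rw [hw] at this
      push_cast at this ⊢
      linear_combination -this
    rw [this]; exact hb2
  · have : x.2.2 - (w : ℚ_[3]) = (N : ℚ_[3]) ^ m * (rep z).2.2 := by
      have := hkey3
      rw [hw] at this
      push_cast at this ⊢
      linear_combination -this
    rw [this]; exact hb3

lemma norm_unit2 : ‖(3 : ℚ_[2])‖ = 1 := by
  have hle : ‖((3 : ℤ) : ℚ_[2])‖ ≤ 1 := Padic.norm_int_le_one 3
  have hnlt : ¬ ‖((3 : ℤ) : ℚ_[2])‖ < 1 := by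
    rw [Padic.norm_intCast_lt_one_iff]
    norm_num
  have := le_antisymm hle (not_lt.1 hnlt)
  simpa using this

lemma norm_unit3 : ‖(2 : ℚ_[3])‖ = 1 := by
  have hle : ‖((2 : ℤ) : ℚ_[3])‖ ≤ 1 := Padic.norm_int_le_one 2
  have hnlt : ¬ ‖((2 : ℤ) : ℚ_[3])‖ < 1 := by
    rw [Padic.norm_intCast_lt_one_iff]
    norm_num
  have := le_antisymm hle (not_lt.1 hnlt)
  simpa using this

lemma norm_N2 (a b N : ℕ) (hN : N = 2 ^ a * 3 ^ b) : ‖(N : ℚ_[2])‖ = ((2 : ℝ)⁻¹) ^ a := by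
  have h2 : ‖(2 : ℚ_[2])‖ = (2 : ℝ)⁻¹ := by
    have := Padic.norm_p (p := 2); simpa using this
  rw [hN]
  push_cast
  rw [norm_mul, norm_pow, norm_pow, h2, norm_unit2, one_pow, mul_one]

lemma norm_N3 (a b N : ℕ) (hN : N = 2 ^ a * 3 ^ b) : ‖(N : ℚ_[3])‖ = ((3 : ℝ)⁻¹) ^ b := by
  have h3 : ‖(3 : ℚ_[3])‖ = (3 : ℝ)⁻¹ := by
    have := Padic.norm_p (p := 3); simpa using this
  rw [hN]
  push_cast
  rw [norm_mul, norm_pow, norm_pow, h3, norm_unit3, one_pow, one_mul]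

def Spec (rep : G → G) (N : ℕ) (x : G) (m : ℕ) (w : ℤ) : Prop :=
  (rep (act ((N : ℚ) ^ (-(m : ℤ))) x)).1 = (x.1 - (w : ℝ)) / (N : ℝ) ^ m ∧
  ‖x.2.1 - (w : ℚ_[2])‖ ≤ ‖(N : ℚ_[2])‖ ^ m ∧ ‖x.2.2 - (w : ℚ_[3])‖ ≤ ‖(N : ℚ_[3])‖ ^ m

lemma spec_exists (rep : G → G) (hrep : ∀ x : G, rep x ∈ F ∧ x - rep x ∈ Γ)
    (N : ℕ) (hN : 0 < N) (x : G) (hx : x ∈ F) (m : ℕ) : ∃ w : ℤ, Spec rep N x m w :=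
  rep_backward rep hrep N hN x hx m

lemma step_aux (rep : G → G) (hrep : ∀ x : G, rep x ∈ F ∧ x - rep x ∈ Γ)
    (a b : ℕ) (N : ℕ) (hN : N = 2 ^ a * 3 ^ b) (x : G) (hx : x ∈ F) (m : ℕ)
    (w₁ w₂ : ℤ) (h₁ : Spec rep N x m w₁) (h₂ : Spec rep N x (m + 1) w₂) :
    ∃ e : ℤ, 0 ≤ e ∧ e < N ∧ w₂ = w₁ - (N : ℤ) ^ m * e ∧
      (rep (act ((N : ℚ) ^ (-((m + 1 : ℕ) : ℤ))) x)).1 ∈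
        Set.Ico ((e : ℝ) / N) (((e : ℝ) + 1) / N) := by
  have hN0 : 0 < N := by rw [hN]; positivity
  have hNR : (0 : ℝ) < (N : ℝ) := by exact_mod_cast hN0
  have hNRm : (0 : ℝ) < (N : ℝ) ^ m := by positivity
  have hNRm1 : (0 : ℝ) < (N : ℝ) ^ (m + 1) := by positivity
  obtain ⟨hr₁, hn₁2, hn₁3⟩ := h₁
  obtain ⟨hr₂, hn₂2, hn₂3⟩ := h₂
  have hNle2 : ‖(N : ℚ_[2])‖ ≤ 1 := by
    have := Padic.norm_int_le_one (p := 2) (N : ℤ); simpa using this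
  have hNle3 : ‖(N : ℚ_[3])‖ ≤ 1 := by
    have := Padic.norm_int_le_one (p := 3) (N : ℤ); simpa using this
  have hd2 : ‖((w₁ - w₂ : ℤ) : ℚ_[2])‖ ≤ ‖(N : ℚ_[2])‖ ^ m := by
    have heq : ((w₁ - w₂ : ℤ) : ℚ_[2]) = (x.2.1 - (w₂ : ℚ_[2])) - (x.2.1 - (w₁ : ℚ_[2])) := by
      push_cast; ring
    rw [heq]
    refine le_trans (nonarch _ _) (max_le (le_trans hn₂2 ?_) hn₁2)
    exact pow_le_pow_of_le_one (norm_nonneg _) hNle2 (by omega)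
  have hd3 : ‖((w₁ - w₂ : ℤ) : ℚ_[3])‖ ≤ ‖(N : ℚ_[3])‖ ^ m := by
    have heq : ((w₁ - w₂ : ℤ) : ℚ_[3]) = (x.2.2 - (w₂ : ℚ_[3])) - (x.2.2 - (w₁ : ℚ_[3])) := by
      push_cast; ring
    rw [heq]
    refine le_trans (nonarch _ _) (max_le (le_trans hn₂3 ?_) hn₁3)
    exact pow_le_pow_of_le_one (norm_nonneg _) hNle3 (by omega)
  have hdvd2 : ((2 : ℤ) ^ (a * m)) ∣ (w₁ - w₂) := by
    have hb : ‖((w₁ - w₂ : ℤ) : ℚ_[2])‖ ≤ (2 : ℝ) ^ (-(a * m : ℕ) : ℤ) := by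
      refine le_trans hd2 ?_
      refine le_of_eq ?_
      rw [norm_N2 a b N hN, ← pow_mul, inv_pow, zpow_neg, zpow_natCast]
    have := (Padic.norm_int_le_pow_iff_dvd (p := 2) (w₁ - w₂) (a * m)).1 (by
      exact_mod_cast hb)
    exact_mod_cast this
  have hdvd3 : ((3 : ℤ) ^ (b * m)) ∣ (w₁ - w₂) := by
    have hb : ‖((w₁ - w₂ : ℤ) : ℚ_[3])‖ ≤ (3 : ℝ) ^ (-(b * m : ℕ) : ℤ) := by
      refine le_trans hd3 ?_
      refine le_of_eq ?_
      rw [norm_N3 a b N hN, ← pow_mul, inv_pow, zpow_neg, zpow_natCast]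
    have := (Padic.norm_int_le_pow_iff_dvd (p := 3) (w₁ - w₂) (b * m)).1 (by
      exact_mod_cast hb)
    exact_mod_cast this
  have hcop : IsCoprime ((2 : ℤ) ^ (a * m)) ((3 : ℤ) ^ (b * m)) := by
    have h1 : Nat.Coprime (2 ^ (a * m)) (3 ^ (b * m)) := by
      apply Nat.Coprime.pow
      norm_num
    have h2 := Nat.isCoprime_iff_coprime.mpr h1
    push_cast at h2
    exact h2
  have hdvdN : ((N : ℤ) ^ m) ∣ (w₁ - w₂) := by
    have hNm : ((N : ℤ) ^ m) = 2 ^ (a * m) * 3 ^ (b * m) := by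
      rw [hN]; push_cast; rw [mul_pow, ← pow_mul, ← pow_mul]
    rw [hNm]
    exact hcop.mul_dvd hdvd2 hdvd3
  obtain ⟨e, he⟩ := hdvdN
  have he_cast : (w₁ : ℝ) - (w₂ : ℝ) = (N : ℝ) ^ m * (e : ℝ) := by exact_mod_cast he
  have hF1 := (hrep (act ((N : ℚ) ^ (-(m : ℤ))) x)).1.1
  have hF2 := (hrep (act ((N : ℚ) ^ (-((m + 1 : ℕ) : ℤ))) x)).1.1
  rw [hr₁] at hF1
  rw [hr₂] at hF2
  have hI1 : 0 ≤ x.1 - (w₁ : ℝ) ∧ x.1 - (w₁ : ℝ) < (N : ℝ) ^ m := by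
    have ht : x.1 - (w₁ : ℝ) = ((x.1 - (w₁ : ℝ)) / (N : ℝ) ^ m) * (N : ℝ) ^ m := by
      field_simp
    constructor
    · rw [ht]; exact mul_nonneg hF1.1 hNRm.le
    · rw [ht]
      calc ((x.1 - (w₁ : ℝ)) / (N : ℝ) ^ m) * (N : ℝ) ^ m < 1 * (N : ℝ) ^ m :=
            mul_lt_mul_of_pos_right hF1.2 hNRm
        _ = (N : ℝ) ^ m := one_mul _
  have hI2 : 0 ≤ x.1 - (w₂ : ℝ) ∧ x.1 - (w₂ : ℝ) < (N : ℝ) ^ (m + 1) := by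
    have ht : x.1 - (w₂ : ℝ) = ((x.1 - (w₂ : ℝ)) / (N : ℝ) ^ (m + 1)) * (N : ℝ) ^ (m + 1) := by
      field_simp
    constructor
    · rw [ht]; exact mul_nonneg hF2.1 hNRm1.le
    · rw [ht]
      calc ((x.1 - (w₂ : ℝ)) / (N : ℝ) ^ (m + 1)) * (N : ℝ) ^ (m + 1)
          < 1 * (N : ℝ) ^ (m + 1) := mul_lt_mul_of_pos_right hF2.2 hNRm1
        _ = (N : ℝ) ^ (m + 1) := one_mul _
  have hps : (N : ℝ) ^ (m + 1) = (N : ℝ) ^ m * (N : ℝ) := pow_succ _ _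
  have heneg : (-1 : ℝ) < (e : ℝ) := by
    by_contra hcon
    push_neg at hcon
    have h1 : (N : ℝ) ^ m * ((e : ℝ) + 1) ≤ 0 :=
      mul_nonpos_iff.mpr (Or.inl ⟨hNRm.le, by linarith⟩)
    have hexp : (N : ℝ) ^ m * ((e : ℝ) + 1) = ((w₁ : ℝ) - (w₂ : ℝ)) + (N : ℝ) ^ m := by
      rw [mul_add, mul_one, ← he_cast]
    linarith [h1, hexp, hI1.2, hI2.1]
  have heNR : (e : ℝ) < (N : ℝ) := by
    have h' : (N : ℝ) ^ m * (e : ℝ) < (N : ℝ) ^ m * (N : ℝ) := by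
      linarith [hI1.1, hI2.2, hps, he_cast]
    exact lt_of_mul_lt_mul_left h' hNRm.le
  have he0 : 0 ≤ e := by
    have : (-1 : ℤ) < e := by exact_mod_cast heneg
    omega
  have heN : e < N := by exact_mod_cast heNR
  refine ⟨e, he0, heN, by linarith [he], ?_⟩
  rw [hr₂]
  constructor
  · rw [div_le_div_iff₀ hNR hNRm1]
    have hE : (x.1 - (w₂ : ℝ)) * (N : ℝ)
        = (x.1 - (w₁ : ℝ)) * (N : ℝ) + (e : ℝ) * (N : ℝ) ^ (m + 1) := by
      rw [hps]; linear_combination (N : ℝ) * he_cast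
    linarith [hE, mul_nonneg hI1.1 hNR.le]
  · rw [div_lt_div_iff₀ hNRm1 hNR]
    have hE : (x.1 - (w₂ : ℝ)) * (N : ℝ)
        = (x.1 - (w₁ : ℝ)) * (N : ℝ) + (e : ℝ) * (N : ℝ) ^ (m + 1) := by
      rw [hps]; linear_combination (N : ℝ) * he_cast
    have hE2 : ((e : ℝ) + 1) * (N : ℝ) ^ (m + 1)
        = (e : ℝ) * (N : ℝ) ^ (m + 1) + (N : ℝ) ^ (m + 1) := by ring
    linarith [hE, hE2, hps, mul_lt_mul_of_pos_right hI1.2 hNR]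

/-- The partition `{A_0, …, A_{N-1}}` is generating for multiplication by `N = 2^a 3^b`
on `G/Γ`: two points of `F` with the same itinerary under all forward and backward
iterates coincide. -/
theorem partition_generating (rep : G → G) (hrep : ∀ x : G, rep x ∈ F ∧ x - rep x ∈ Γ)
    (a b : ℕ) (ha : 1 ≤ a) (hb : 1 ≤ b) (N : ℕ) (hN : N = 2 ^ a * 3 ^ b)
    (x y : G) (hx : x ∈ F) (hy : y ∈ F)
    (h : ∀ (j : ℤ) (k : ℕ), k < N →
      (rep (act ((N : ℚ) ^ j) x) ∈ A N k ↔ rep (act ((N : ℚ) ^ j) y) ∈ A N k)) :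
    x = y := by
  have hN0 : 0 < N := by rw [hN]; positivity
  have hNR : (0 : ℝ) < (N : ℝ) := by exact_mod_cast hN0
  have h2N : 2 ≤ N := by
    rw [hN]
    calc 2 = 2 ^ 1 * 1 := by norm_num
      _ ≤ 2 ^ a * 3 ^ b := Nat.mul_le_mul (Nat.pow_le_pow_right (by norm_num) ha)
          (Nat.one_le_pow _ _ (by norm_num))
  have hN1 : (1 : ℝ) < (N : ℝ) := by exact_mod_cast (by omega : 1 < N)
  -- Part 1 : real coordinates
  have key1 : ∀ m : ℕ,
      Int.fract ((N : ℝ) ^ (m + 1) * x.1) - Int.fract ((N : ℝ) ^ (m + 1) * y.1)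
        = (N : ℝ) * (Int.fract ((N : ℝ) ^ m * x.1) - Int.fract ((N : ℝ) ^ m * y.1)) := by
    intro m
    set u := Int.fract ((N : ℝ) ^ m * x.1) with hu
    set v := Int.fract ((N : ℝ) ^ m * y.1) with hv
    have hu01 : 0 ≤ u ∧ u < 1 := ⟨Int.fract_nonneg _, Int.fract_lt_one _⟩
    have hv01 : 0 ≤ v ∧ v < 1 := ⟨Int.fract_nonneg _, Int.fract_lt_one _⟩
    set k : ℤ := ⌊(N : ℝ) * u⌋ with hk
    have hfl : (k : ℝ) ≤ (N : ℝ) * u := Int.floor_le _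
    have hfu : (N : ℝ) * u < (k : ℝ) + 1 := Int.lt_floor_add_one _
    have hk0 : 0 ≤ k := Int.floor_nonneg.2 (mul_nonneg hNR.le hu01.1)
    have hkN : k < N := by
      have h1 : (N : ℝ) * u < (N : ℝ) * 1 := mul_lt_mul_of_pos_left hu01.2 hNR
      have h2 : (k : ℝ) < (N : ℝ) := by linarith
      exact_mod_cast h2
    have hcast : ((k.toNat : ℕ) : ℝ) = (k : ℝ) := by exact_mod_cast Int.toNat_of_nonneg hk0
    have hkNn : k.toNat < N := by omega
    have hxatom : rep (act ((N : ℚ) ^ (m : ℤ)) x) ∈ A N k.toNat := by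
      refine ⟨?_, (hrep _).1.2.1, (hrep _).1.2.2⟩
      rw [rep_forward rep hrep N x hx m, ← hu]
      refine ⟨?_, ?_⟩
      · rw [hcast, div_le_iff₀ hNR]
        linarith
      · rw [hcast, lt_div_iff₀ hNR]
        linarith
    have hyatom := (h (m : ℤ) k.toNat hkNn).mp hxatom
    have hyI := hyatom.1
    rw [rep_forward rep hrep N y hy m, ← hv, hcast] at hyI
    have hyl : (k : ℝ) ≤ (N : ℝ) * v := by
      have := hyI.1
      rw [div_le_iff₀ hNR] at this
      linarith
    have hyu : (N : ℝ) * v < (k : ℝ) + 1 := by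
      have := hyI.2
      rw [lt_div_iff₀ hNR] at this
      linarith
    have hfv : ⌊(N : ℝ) * v⌋ = k := Int.floor_eq_iff.2 ⟨hyl, hyu⟩
    have hrecx : Int.fract ((N : ℝ) ^ (m + 1) * x.1) = (N : ℝ) * u - (k : ℝ) := by
      have h1 : (N : ℝ) ^ (m + 1) * x.1
          = (N : ℝ) * u + ((N * ⌊(N : ℝ) ^ m * x.1⌋ : ℤ) : ℝ) := by
        rw [hu, ← Int.self_sub_floor]
        push_cast
        ring
      rw [h1, Int.fract_add_intCast, ← Int.self_sub_floor, ← hk]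
    have hrecy : Int.fract ((N : ℝ) ^ (m + 1) * y.1) = (N : ℝ) * v - (k : ℝ) := by
      have h1 : (N : ℝ) ^ (m + 1) * y.1
          = (N : ℝ) * v + ((N * ⌊(N : ℝ) ^ m * y.1⌋ : ℤ) : ℝ) := by
        rw [hv, ← Int.self_sub_floor]
        push_cast
        ring
      rw [h1, Int.fract_add_intCast, ← Int.self_sub_floor, hfv]
    rw [hrecx, hrecy]
    ring
  have key2 : ∀ m : ℕ,
      Int.fract ((N : ℝ) ^ m * x.1) - Int.fract ((N : ℝ) ^ m * y.1)
        = (N : ℝ) ^ m * (x.1 - y.1) := by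
    intro m
    induction m with
    | zero =>
      simp [Int.fract_eq_self.2 ⟨hx.1.1, hx.1.2⟩, Int.fract_eq_self.2 ⟨hy.1.1, hy.1.2⟩]
    | succ m ih =>
      rw [key1 m, ih, pow_succ]
      ring
  have hxy1 : x.1 = y.1 := by
    by_contra hne
    have hd : 0 < |x.1 - y.1| := abs_pos.2 (sub_ne_zero.2 hne)
    obtain ⟨n, hn⟩ := pow_unbounded_of_one_lt (|x.1 - y.1|⁻¹) hN1
    have hlt : |Int.fract ((N : ℝ) ^ n * x.1) - Int.fract ((N : ℝ) ^ n * y.1)| < 1 := by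
      rw [abs_sub_lt_iff]
      constructor <;>
        linarith [Int.fract_nonneg ((N : ℝ) ^ n * x.1), Int.fract_lt_one ((N : ℝ) ^ n * x.1),
          Int.fract_nonneg ((N : ℝ) ^ n * y.1), Int.fract_lt_one ((N : ℝ) ^ n * y.1)]
    rw [key2 n, abs_mul, abs_of_nonneg (pow_nonneg hNR.le n)] at hlt
    have h1 : |x.1 - y.1|⁻¹ * |x.1 - y.1| < (N : ℝ) ^ n * |x.1 - y.1| :=
      mul_lt_mul_of_pos_right hn hd
    rw [inv_mul_cancel₀ hd.ne'] at h1
    linarith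
  -- Part 2 : p-adic coordinates
  have huniq : ∀ m : ℕ, ∀ w w' : ℤ, Spec rep N x m w → Spec rep N y m w' → w = w' := by
    intro m
    induction m with
    | zero =>
      have hz : ∀ t : G, t ∈ F → ∀ v : ℤ, Spec rep N t 0 v → v = 0 := by
        intro t ht v hv
        have hF := (hrep (act ((N : ℚ) ^ (-((0 : ℕ) : ℤ))) t)).1.1
        rw [hv.1, pow_zero, div_one] at hF
        have h1 : (v : ℝ) < 1 := by linarith [hF.1, ht.1.1, ht.1.2]
        have h2 : (-1 : ℝ) < (v : ℝ) := by linarith [hF.2, ht.1.1]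
        have h1' : v < 1 := by exact_mod_cast h1
        have h2' : -1 < v := by exact_mod_cast h2
        omega
      intro w w' hw hw'
      rw [hz x hx w hw, hz y hy w' hw']
    | succ m ih =>
      intro w₂ w₂' hw₂ hw₂'
      obtain ⟨w₁, hw₁⟩ := spec_exists rep hrep N hN0 x hx m
      obtain ⟨w₁', hw₁'⟩ := spec_exists rep hrep N hN0 y hy m
      have h11 : w₁ = w₁' := ih w₁ w₁' hw₁ hw₁'
      obtain ⟨e, he0, heN, hew, heI⟩ := step_aux rep hrep a b N hN x hx m w₁ w₂ hw₁ hw₂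
      obtain ⟨e', he0', heN', hew', heI'⟩ := step_aux rep hrep a b N hN y hy m w₁' w₂' hw₁' hw₂'
      have hcast : ((e.toNat : ℕ) : ℝ) = (e : ℝ) := by exact_mod_cast Int.toNat_of_nonneg he0
      have hkNn : e.toNat < N := by omega
      have hxatom : rep (act ((N : ℚ) ^ (-((m + 1 : ℕ) : ℤ))) x) ∈ A N e.toNat := by
        refine ⟨?_, (hrep _).1.2.1, (hrep _).1.2.2⟩
        rw [Set.mem_Ico, hcast]
        exact heI
      have hyatom := (h (-((m + 1 : ℕ) : ℤ)) e.toNat hkNn).mp hxatom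
      have hyI := hyatom.1
      rw [Set.mem_Ico, hcast] at hyI
      have hee' : e = e' := by
        have hr1 : (e : ℝ) < (e' : ℝ) + 1 := by
          have hlt := lt_of_le_of_lt hyI.1 heI'.2
          rw [div_lt_div_iff₀ hNR hNR] at hlt
          exact lt_of_mul_lt_mul_right hlt hNR.le
        have hr2 : (e' : ℝ) < (e : ℝ) + 1 := by
          have hlt := lt_of_le_of_lt heI'.1 hyI.2
          rw [div_lt_div_iff₀ hNR hNR] at hlt
          exact lt_of_mul_lt_mul_right hlt hNR.le
        have hi1 : e < e' + 1 := by exact_mod_cast hr1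
        have hi2 : e' < e + 1 := by exact_mod_cast hr2
        omega
      rw [hew, hew', h11, hee']
  have hnorm2le : ‖(N : ℚ_[2])‖ ≤ (2 : ℝ)⁻¹ := by
    rw [norm_N2 a b N hN]
    calc ((2 : ℝ)⁻¹) ^ a ≤ ((2 : ℝ)⁻¹) ^ 1 :=
          pow_le_pow_of_le_one (by norm_num) (by norm_num) ha
      _ = (2 : ℝ)⁻¹ := pow_one _
  have hnorm3le : ‖(N : ℚ_[3])‖ ≤ (3 : ℝ)⁻¹ := by
    rw [norm_N3 a b N hN]
    calc ((3 : ℝ)⁻¹) ^ b ≤ ((3 : ℝ)⁻¹) ^ 1 :=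
          pow_le_pow_of_le_one (by norm_num) (by norm_num) hb
      _ = (3 : ℝ)⁻¹ := pow_one _
  have hbound : ∀ m : ℕ, ‖x.2.1 - y.2.1‖ ≤ ((2 : ℝ)⁻¹) ^ m ∧
      ‖x.2.2 - y.2.2‖ ≤ ((3 : ℝ)⁻¹) ^ m := by
    intro m
    obtain ⟨w, hw⟩ := spec_exists rep hrep N hN0 x hx m
    obtain ⟨w', hw'⟩ := spec_exists rep hrep N hN0 y hy m
    have hww' : w = w' := huniq m w w' hw hw'
    subst hww'
    constructor
    · have heq : x.2.1 - y.2.1 = (x.2.1 - (w : ℚ_[2])) - (y.2.1 - (w : ℚ_[2])) := by ring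
      calc ‖x.2.1 - y.2.1‖ ≤ max ‖x.2.1 - (w : ℚ_[2])‖ ‖y.2.1 - (w : ℚ_[2])‖ := by
            rw [heq]; exact nonarch _ _
        _ ≤ ‖(N : ℚ_[2])‖ ^ m := max_le hw.2.1 hw'.2.1
        _ ≤ ((2 : ℝ)⁻¹) ^ m := pow_le_pow_left₀ (norm_nonneg _) hnorm2le m
    · have heq : x.2.2 - y.2.2 = (x.2.2 - (w : ℚ_[3])) - (y.2.2 - (w : ℚ_[3])) := by ring
      calc ‖x.2.2 - y.2.2‖ ≤ max ‖x.2.2 - (w : ℚ_[3])‖ ‖y.2.2 - (w : ℚ_[3])‖ := by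
            rw [heq]; exact nonarch _ _
        _ ≤ ‖(N : ℚ_[3])‖ ^ m := max_le hw.2.2 hw'.2.2
        _ ≤ ((3 : ℝ)⁻¹) ^ m := pow_le_pow_left₀ (norm_nonneg _) hnorm3le m
  have hxy2 : x.2.1 = y.2.1 := by
    by_contra hne
    have hd : 0 < ‖x.2.1 - y.2.1‖ := norm_pos_iff.2 (sub_ne_zero.2 hne)
    obtain ⟨n, hn⟩ := exists_pow_lt_of_lt_one hd (by norm_num : (2 : ℝ)⁻¹ < 1)
    linarith [(hbound n).1]
  have hxy3 : x.2.2 = y.2.2 := by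
    by_contra hne
    have hd : 0 < ‖x.2.2 - y.2.2‖ := norm_pos_iff.2 (sub_ne_zero.2 hne)
    obtain ⟨n, hn⟩ := exists_pow_lt_of_lt_one hd (by norm_num : (3 : ℝ)⁻¹ < 1)
    linarith [(hbound n).2]
  exact Prod.ext hxy1 (Prod.ext hxy2 hxy3)
end
end
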